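/- Let u be an integer with u ≡ 3 (mod 4) such that p = u² + 64 is prime. Then the point (u/4, −u/8) is a rational point on the Neumann–Setzer curve E₀ : y² + xy = x³ − ((u+1)/4)x² + 4x − u, and it has order exactly 2 in the group of rational points E₀(ℚ). -/

import Mathlib

/-- The Neumann–Setzer curve `E₀ : y² + xy = x³ − ((u+1)/4)x² + 4x − u` over `ℚ`,
in affine coordinates. -/
noncomputable def NeumannSetzerE₀ (u : ℤ) : WeierstrassCurve.Affine ℚ :=
  { a₁ := 1, a₂ := -(((u : ℚ) + 1) / 4), a₃ := 0, a₄ := 4, a₆ := -(u : ℚ) }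

theorem stmt_4 (u : ℤ) (hu : u % 4 = 3) (hp : Prime (u ^ 2 + 64)) :
    ∃ h : (NeumannSetzerE₀ u).Nonsingular ((u : ℚ) / 4) (-(u : ℚ) / 8),
      addOrderOf (WeierstrassCurve.Affine.Point.some _ _ h) = 2 := by
  have h : (NeumannSetzerE₀ u).Nonsingular ((u : ℚ) / 4) (-(u : ℚ) / 8) := by
    rw [WeierstrassCurve.Affine.nonsingular_iff, WeierstrassCurve.Affine.equation_iff]
    constructor
    · simp only [NeumannSetzerE₀]; ring
    · left
      simp only [NeumannSetzerE₀]
      intro hc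
      have : (u : ℚ) ^ 2 + 64 = 0 := by field_simp at hc; linarith
      nlinarith [sq_nonneg (u : ℚ)]
  refine ⟨h, ?_⟩
  have h2 : WeierstrassCurve.Affine.Point.some _ _ h + WeierstrassCurve.Affine.Point.some _ _ h = 0 := by
    apply WeierstrassCurve.Affine.Point.add_of_Y_eq rfl
    simp only [NeumannSetzerE₀, WeierstrassCurve.Affine.negY]
    ring
  have := Fact.mk Nat.prime_two
  exact addOrderOf_eq_prime (by rw [two_nsmul]; exact h2)
    (WeierstrassCurve.Affine.Point.some_ne_zero h)
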